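/- Let X be a finite set, ε ∈ [0,1], and let H_ε be a random function X → {0,1} where each value H_ε(x) is independently 1 with probability ε. Let H₀ be the all-zero function. Then for any quantum algorithm A making at most q quantum queries to its oracle, |Pr[A^{H_ε} = 1] − Pr[A^{H₀} = 1]| ≤ 8q²ε. -/

import Mathlib

noncomputable section
open Matrix
open scoped ComplexOrder

/-- Basis index for a quantum query algorithm: query register `X`, one-qubit answer
register, and workspace `Z`. -/
abbrev QJ (X Z : Type*) := X × Bool × Z

variable {X Z : Type*} [Fintype X] [DecidableEq X] [Fintype Z] [DecidableEq Z]

/-- The XOR query oracle `|x⟩|b⟩|z⟩ ↦ |x⟩|b ⊕ f(x)⟩|z⟩` for `f : X → {0,1}`. -/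
def oracleM (f : X → Bool) : Matrix (QJ X Z) (QJ X Z) ℂ :=
  Matrix.of fun p q => if p = (q.1, xor q.2.1 (f q.1), q.2.2) then 1 else 0

/-- The full circuit `V_q · O · V_{q-1} · O ⋯ O · V_0` of a `q`-query algorithm. -/
def circuit : ℕ → (ℕ → Matrix (QJ X Z) (QJ X Z) ℂ) → Matrix (QJ X Z) (QJ X Z) ℂ →
    Matrix (QJ X Z) (QJ X Z) ℂ
  | 0, V, _ => V 0
  | n + 1, V, O => V (n + 1) * O * circuit n V O

/-- The `ε`-Bernoulli density on Boolean functions: each value is independently `1`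
with probability `ε`. -/
def bern (ε : ℝ) (f : X → Bool) : ℝ := ∏ x, if f x then ε else 1 - ε

/-- `Pr[A^f = 1]`: the algorithm runs the circuit on `ψ` with oracle `f` and finally
measures the POVM element `Mout`. -/
def accProb (q : ℕ) (V : ℕ → Matrix (QJ X Z) (QJ X Z) ℂ) (ψ : QJ X Z → ℂ)
    (Mout : Matrix (QJ X Z) (QJ X Z) ℂ) (f : X → Bool) : ℝ :=
  (star ((circuit q V (oracleM f)).mulVec ψ) ⬝ᵥ
    Mout.mulVec ((circuit q V (oracleM f)).mulVec ψ)).re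

set_option linter.unusedSectionVars false
set_option maxHeartbeats 1000000

namespace HRSaux

section PartC
open Polynomial Real


lemma abs_sin_nat_mul_le (n : ℕ) (x : ℝ) : |Real.sin (n * x)| ≤ n * |Real.sin x| := by
  induction n with
  | zero => simp
  | succ n ih =>
    have h : ((n : ℝ) + 1) * x = n * x + x := by ring
    push_cast
    rw [h, Real.sin_add]
    have b1 : |Real.sin (n*x) * Real.cos x| ≤ |Real.sin (n*x)| := by
      rw [abs_mul]
      calc |Real.sin (n*x)| * |Real.cos x| ≤ |Real.sin (n*x)| * 1 := by
            gcongr; exact Real.abs_cos_le_one x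
        _ = |Real.sin (n*x)| := mul_one _
    have b2 : |Real.cos (n*x) * Real.sin x| ≤ |Real.sin x| := by
      rw [abs_mul]
      calc |Real.cos (n*x)| * |Real.sin x| ≤ 1 * |Real.sin x| := by
            gcongr; exact Real.abs_cos_le_one _
        _ = |Real.sin x| := one_mul _
    calc |Real.sin (n*x) * Real.cos x + Real.cos (n*x) * Real.sin x|
        ≤ |Real.sin (n*x) * Real.cos x| + |Real.cos (n*x) * Real.sin x| := abs_add_le _ _
      _ ≤ |Real.sin (n*x)| + |Real.sin x| := add_le_add b1 b2
      _ ≤ (n : ℝ) * |Real.sin x| + |Real.sin x| := by gcongr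
      _ = ((n : ℝ) + 1) * |Real.sin x| := by ring

lemma natDegree_T_le (n : ℕ) : (Polynomial.Chebyshev.T ℝ n).natDegree ≤ n := by
  induction n using Nat.strong_induction_on with
  | _ n ih =>
    match n with
    | 0 => simp [Polynomial.Chebyshev.T_zero]
    | 1 => simp [Polynomial.Chebyshev.T_one]
    | (m + 2) =>
      have h : ((m : ℤ) + 2) = ((m + 2 : ℕ) : ℤ) := by push_cast; ring
      have hrec := Polynomial.Chebyshev.T_add_two ℝ (m : ℤ)
      rw [h] at hrec
      rw [hrec]
      have h1 : ((m + 1 : ℕ) : ℤ) = (m : ℤ) + 1 := by push_cast; ring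
      have i1 : (Polynomial.Chebyshev.T ℝ ((m : ℤ) + 1)).natDegree ≤ m + 1 := by
        rw [← h1]; exact ih (m+1) (by omega)
      have i0 : (Polynomial.Chebyshev.T ℝ (m : ℤ)).natDegree ≤ m := ih m (by omega)
      calc (2 * X * Polynomial.Chebyshev.T ℝ ((m:ℤ)+1) - Polynomial.Chebyshev.T ℝ (m:ℤ)).natDegree
          ≤ max (2 * X * Polynomial.Chebyshev.T ℝ ((m:ℤ)+1)).natDegree
              (Polynomial.Chebyshev.T ℝ (m:ℤ)).natDegree := Polynomial.natDegree_sub_le _ _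
        _ ≤ m + 2 := by
            apply max_le _ (by omega)
            calc (2 * X * Polynomial.Chebyshev.T ℝ ((m:ℤ)+1)).natDegree
                ≤ (2 * X : ℝ[X]).natDegree + (Polynomial.Chebyshev.T ℝ ((m:ℤ)+1)).natDegree :=
                  Polynomial.natDegree_mul_le
              _ ≤ 1 + (m + 1) := by
                  gcongr
                  · calc (2 * X : ℝ[X]).natDegree ≤ (2 : ℝ[X]).natDegree + (X : ℝ[X]).natDegree :=
                        Polynomial.natDegree_mul_le
                    _ ≤ 1 := by simp
              _ = m + 2 := by ring


lemma markov_endpoint (d : ℕ) (hd : 1 ≤ d) (P : ℝ[X]) (hdeg : P.natDegree ≤ d)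
    (hbd : ∀ x : ℝ, 0 ≤ x → x ≤ 1 → 0 ≤ P.eval x ∧ P.eval x ≤ 1)
    (ε : ℝ) (h0 : 0 ≤ ε) (h1 : ε ≤ 1) :
    |P.eval ε - P.eval 0| ≤ 2 * (d : ℝ)^2 * ε := by
  have hdR : (0:ℝ) < d := by exact_mod_cast hd
  set t : ℕ → ℝ := fun k => (1 - Real.cos (k * π / d)) / 2 with ht
  have hpi : (0:ℝ) < π := Real.pi_pos
  have hangle : ∀ k : ℕ, k ≤ d → 0 ≤ (k:ℝ) * π / d ∧ (k:ℝ) * π / d ≤ π := by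
    intro k hk
    refine ⟨by positivity, ?_⟩
    rw [div_le_iff₀ hdR]
    have : (k:ℝ) ≤ d := by exact_mod_cast hk
    nlinarith
  have hmono : ∀ j k : ℕ, j < k → k ≤ d → t j < t k := by
    intro j k hjk hk
    have hj := hangle j (by omega)
    have hk' := hangle k hk
    have hcos : Real.cos ((k:ℝ) * π / d) < Real.cos ((j:ℝ) * π / d) := by
      apply Real.strictAntiOn_cos ⟨hj.1, hj.2⟩ ⟨hk'.1, hk'.2⟩
      have : (j:ℝ) < (k:ℝ) := by exact_mod_cast hjk
      gcongr
    simp only [ht]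
    linarith
  have ht0 : t 0 = 0 := by simp [ht]
  have htmem : ∀ k : ℕ, k ≤ d → 0 ≤ t k ∧ t k ≤ 1 := by
    intro k hk
    have h1 := Real.cos_le_one ((k:ℝ) * π / d)
    have h2 := Real.neg_one_le_cos ((k:ℝ) * π / d)
    constructor <;> (simp only [ht]; linarith)
  have ht1pos : 0 < t 1 := by
    have := hmono 0 1 (by omega) hd
    linarith [ht0 ▸ this]
  -- value of t 1 as sin²
  have ht1sq : t 1 = Real.sin (π / (2 * d)) ^ 2 := by
    have hc : Real.cos (2 * (π / (2 * d))) = 1 - 2 * Real.sin (π / (2 * d)) ^ 2 := by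
      nlinarith [Real.cos_two_mul (π / (2 * d)), Real.sin_sq_add_cos_sq (π / (2 * d))]
    have harg : (1:ℝ) * π / d = 2 * (π / (2 * d)) := by field_simp
    simp only [ht]
    rw [Nat.cast_one, harg, hc]
    ring
  have ht1lb : 1 / (d:ℝ)^2 ≤ t 1 := by
    rw [ht1sq]
    have harg0 : 0 ≤ π / (2 * d) := by positivity
    have harg1 : π / (2 * d) ≤ π / 2 := by
      rw [div_le_div_iff₀ (by positivity) (by norm_num)]
      have hd1 : (1:ℝ) ≤ d := by exact_mod_cast hd
      nlinarith
    have := Real.mul_le_sin harg0 harg1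
    have hval : 2 / π * (π / (2 * d)) = 1 / d := by field_simp
    have hsin : 1 / (d:ℝ) ≤ Real.sin (π / (2 * d)) := by rw [← hval]; exact this
    have h0' : (0:ℝ) ≤ 1 / d := by positivity
    calc 1 / (d:ℝ)^2 = (1/(d:ℝ))^2 := by ring
      _ ≤ Real.sin (π / (2 * d)) ^ 2 := by
          apply pow_le_pow_left₀ h0' hsin
  by_cases hsmall : ε ≤ t 1
  swap
  · -- trivial branch : ε > t 1 ≥ 1/d², so 2 d² ε ≥ 2 > 1
    push_neg at hsmall
    have hεlb : 1 / (d:ℝ)^2 < ε := lt_of_le_of_lt ht1lb hsmall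
    have h2 : (1:ℝ) ≤ 2 * (d:ℝ)^2 * ε := by
      have hd2 : (0:ℝ) < (d:ℝ)^2 := by positivity
      rw [div_lt_iff₀ hd2] at hεlb
      nlinarith
    have hP0 := hbd 0 le_rfl zero_le_one
    have hPε := hbd ε h0 h1
    rw [abs_sub_le_iff]
    constructor <;> linarith
  -- main branch
  have hεt : ∀ j : ℕ, 1 ≤ j → j ≤ d → ε ≤ t j := by
    intro j hj1 hjd
    rcases eq_or_lt_of_le hj1 with h | h
    · rw [← h]; exact hsmall
    · exact hsmall.trans (hmono 1 j h hjd).le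
  set S : Finset ℕ := Finset.range (d+1) with hS
  have hmemS : ∀ k, k ∈ S ↔ k ≤ d := by
    intro k
    rw [hS, Finset.mem_range]
    omega
  have hinj : Set.InjOn t S := by
    intro a ha b hb hab
    have ha' : a ≤ d := (hmemS a).mp (Finset.mem_coe.mp ha)
    have hb' : b ≤ d := (hmemS b).mp (Finset.mem_coe.mp hb)
    by_contra hne
    rcases Nat.lt_or_ge a b with h | h
    · exact absurd hab (hmono a b h (by omega)).ne
    · rcases Nat.lt_or_ge b a with h' | h'
      · exact absurd hab.symm (hmono b a h' (by omega)).ne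
      · omega
  -- evaluation of Lagrange basis
  set B : ℕ → ℝ := fun k => (Lagrange.basis S t k).eval ε with hB
  have hBeval : ∀ k, B k = ∏ j ∈ S.erase k, ((t k - t j)⁻¹ * (ε - t j)) := by
    intro k
    simp only [hB, Lagrange.basis, Polynomial.eval_prod, Lagrange.basisDivisor,
      Polynomial.eval_mul, Polynomial.eval_C, Polynomial.eval_sub, Polynomial.eval_X]
  -- interpolation identity
  have interp_eval : ∀ f : ℝ[X], f.natDegree ≤ d →
      f.eval ε = ∑ k ∈ S, f.eval (t k) * B k := by
    intro f hf
    have hdeg' : f.degree < S.card := by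
      rw [hS, Finset.card_range]
      calc f.degree ≤ (f.natDegree : WithBot ℕ) := Polynomial.degree_le_natDegree
        _ < ((d+1 : ℕ) : WithBot ℕ) := by exact_mod_cast Nat.lt_succ_of_le hf
    conv_lhs => rw [Lagrange.eq_interpolate hinj hdeg']
    rw [Lagrange.interpolate_apply, Polynomial.eval_finset_sum]
    apply Finset.sum_congr rfl
    intro k _
    rw [Polynomial.eval_mul, Polynomial.eval_C]
  -- bounds on B 0
  have hB0 : 0 ≤ B 0 ∧ B 0 ≤ 1 := by
    rw [hBeval 0]
    have hfac : ∀ j ∈ S.erase 0, 0 ≤ (t 0 - t j)⁻¹ * (ε - t j) ∧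
        (t 0 - t j)⁻¹ * (ε - t j) ≤ 1 := by
      intro j hj
      rw [Finset.mem_erase, hmemS] at hj
      have hj1 : 1 ≤ j := by omega
      have htj : 0 < t j := by
        have := hmono 0 j (by omega) hj.2
        rwa [ht0] at this
      have hεj : ε ≤ t j := hεt j hj1 hj.2
      have heq : (t 0 - t j)⁻¹ * (ε - t j) = (t j - ε) / t j := by
        rw [ht0]
        field_simp [htj.ne']
        ring
      rw [heq]
      constructor
      · apply div_nonneg (by linarith) htj.le
      · rw [div_le_one htj]; linarith
    constructor
    · exact Finset.prod_nonneg fun j hj => (hfac j hj).1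
    · exact Finset.prod_le_one (fun j hj => (hfac j hj).1) (fun j hj => (hfac j hj).2)
  -- sign of B k for k ≥ 1
  have hsign : ∀ k, 1 ≤ k → k ≤ d → |B k| = (-1:ℝ)^(k+1) * B k := by
    intro k hk1 hkd
    have hnn : 0 ≤ (-1:ℝ)^(k+1) * B k := by
      have hsplit : (-1:ℝ)^(k+1) * B k =
          ∏ j ∈ S.erase k, ((if j ∈ Finset.Ico 1 k then (-1:ℝ) else 1) *
            ((t k - t j)⁻¹ * (ε - t j))) := by
        rw [Finset.prod_mul_distrib, ← hBeval k]
        congr 1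
        rw [← Finset.prod_filter_mul_prod_filter_not (S.erase k) (· ∈ Finset.Ico 1 k)]
        have hfilter : (S.erase k).filter (· ∈ Finset.Ico 1 k) = Finset.Ico 1 k := by
          ext j
          simp only [Finset.mem_filter, Finset.mem_erase, Finset.mem_Ico, hS,
            Finset.mem_range]
          omega
        have h2 : ∏ j ∈ (S.erase k).filter (fun j => ¬ (j ∈ Finset.Ico 1 k)),
            (if j ∈ Finset.Ico 1 k then (-1:ℝ) else 1) = 1 := by
          apply Finset.prod_eq_one
          intro j hj
          rw [Finset.mem_filter] at hj
          rw [if_neg hj.2]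
        rw [h2, mul_one]
        have h1 : ∏ j ∈ (S.erase k).filter (· ∈ Finset.Ico 1 k),
            (if j ∈ Finset.Ico 1 k then (-1:ℝ) else 1) = ∏ j ∈ Finset.Ico 1 k, (-1:ℝ) := by
          rw [hfilter]
          apply Finset.prod_congr rfl
          intro j hj
          rw [if_pos hj]
        rw [h1, Finset.prod_const, Nat.card_Ico]
        obtain ⟨m, rfl⟩ : ∃ m, k = m + 1 := ⟨k - 1, by omega⟩
        have : m + 1 + 1 = m + 2 := by ring
        rw [this, pow_add]
        norm_num
      rw [hsplit]
      apply Finset.prod_nonneg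
      intro j hj
      rw [Finset.mem_erase, hmemS] at hj
      by_cases hmem : j ∈ Finset.Ico 1 k
      · rw [if_pos hmem]
        rw [Finset.mem_Ico] at hmem
        have h1 : 0 < t k - t j := sub_pos.mpr (hmono j k hmem.2 hkd)
        have h2 : ε - t j ≤ 0 := sub_nonpos.mpr (hεt j hmem.1 (by omega))
        have : (t k - t j)⁻¹ * (ε - t j) ≤ 0 :=
          mul_nonpos_iff.mpr (Or.inl ⟨(inv_pos.mpr h1).le, h2⟩)
        linarith
      · rw [if_neg hmem]
        rw [Finset.mem_Ico] at hmem
        push_neg at hmem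
        rw [one_mul]
        rcases Nat.lt_or_ge j 1 with hj0 | hj1
        · -- j = 0
          have : j = 0 := by omega
          subst this
          have htk : 0 < t k := by
            have := hmono 0 k (by omega) hkd
            rwa [ht0] at this
          rw [ht0]
          simp only [sub_zero]
          exact mul_nonneg (inv_nonneg.mpr htk.le) h0
        · -- j > k
          have hjk : k < j := by
            rcases Nat.lt_or_ge k j with h | h
            · exact h
            · exfalso; have := hmem hj1; omega
          have h1 : t k - t j < 0 := sub_neg.mpr (hmono k j hjk hj.2)
          have h2 : ε - t j ≤ 0 := sub_nonpos.mpr (hεt j (by omega) hj.2)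
          have := mul_nonneg (neg_nonneg.2 (inv_nonpos.mpr h1.le)) (neg_nonneg.2 h2)
          rwa [neg_mul_neg] at this
    -- conclude |B k| = (-1)^(k+1) * B k
    have habs : |(-1:ℝ)^(k+1) * B k| = |B k| := by
      rw [abs_mul, abs_pow, abs_neg, abs_one, one_pow, one_mul]
    rw [← habs, abs_of_nonneg hnn]
  -- the Chebyshev comparison polynomial
  set G : ℝ[X] := (Polynomial.Chebyshev.T ℝ (d:ℤ)).comp (1 - 2 * Polynomial.X) with hG
  have hGdeg : G.natDegree ≤ d := by
    rw [hG]
    calc ((Polynomial.Chebyshev.T ℝ (d:ℤ)).comp (1 - 2 * Polynomial.X)).natDegree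
        ≤ (Polynomial.Chebyshev.T ℝ (d:ℤ)).natDegree * (1 - 2 * Polynomial.X : ℝ[X]).natDegree :=
          Polynomial.natDegree_comp_le
      _ ≤ d * 1 := by
          apply Nat.mul_le_mul
          · exact_mod_cast natDegree_T_le d
          · calc (1 - 2 * Polynomial.X : ℝ[X]).natDegree
                ≤ max (1 : ℝ[X]).natDegree (2 * Polynomial.X : ℝ[X]).natDegree :=
                  Polynomial.natDegree_sub_le _ _
              _ ≤ 1 := by
                  apply max_le (by simp)
                  calc (2 * Polynomial.X : ℝ[X]).natDegree
                      ≤ (2:ℝ[X]).natDegree + (Polynomial.X:ℝ[X]).natDegree :=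
                        Polynomial.natDegree_mul_le
                    _ ≤ 1 := by simp
      _ = d := by ring
  have hGeval : ∀ x : ℝ, G.eval x = (Polynomial.Chebyshev.T ℝ (d:ℤ)).eval (1 - 2*x) := by
    intro x
    rw [hG, Polynomial.eval_comp]
    norm_num
  have hGnode : ∀ k, k ≤ d → G.eval (t k) = (-1:ℝ)^k := by
    intro k hk
    rw [hGeval]
    have harg : 1 - 2 * t k = Real.cos ((k:ℝ) * π / d) := by
      simp only [ht]; ring
    rw [harg]
    have := Polynomial.Chebyshev.T_real_cos ((k:ℝ) * π / d) (d:ℤ)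
    rw [this]
    have harg2 : ((d:ℤ):ℝ) * ((k:ℝ) * π / d) = (k:ℝ) * π := by
      push_cast
      field_simp
    rw [harg2]
    have := Real.cos_nat_mul_pi_sub 0 k
    simpa using this
  -- trig bound : 1 - G.eval ε ≤ 2 d² ε
  have htrig : 1 - G.eval ε ≤ 2 * (d:ℝ)^2 * ε := by
    set u : ℝ := Real.sqrt ε with hu
    set s0 : ℝ := Real.arcsin u with hs0
    have hu0 : 0 ≤ u := Real.sqrt_nonneg _
    have hu1 : u ≤ 1 := Real.sqrt_le_one.mpr h1
    have hsin : Real.sin s0 = u := Real.sin_arcsin (by linarith) hu1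
    have hε' : Real.sin s0 ^ 2 = ε := by rw [hsin, hu, Real.sq_sqrt h0]
    have hcos2 : ∀ y : ℝ, Real.cos (2 * y) = 1 - 2 * Real.sin y ^ 2 := by
      intro y
      nlinarith [Real.cos_two_mul y, Real.sin_sq_add_cos_sq y]
    have h1m2 : 1 - 2 * ε = Real.cos (2 * s0) := by rw [hcos2, hε']
    have hGε : G.eval ε = Real.cos ((d:ℝ) * (2 * s0)) := by
      rw [hGeval, h1m2]
      have := Polynomial.Chebyshev.T_real_cos (2 * s0) (d:ℤ)
      rw [this]
      push_cast
      ring_nf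
    have harg : (d:ℝ) * (2 * s0) = 2 * ((d:ℝ) * s0) := by ring
    rw [hGε, harg, hcos2 ((d:ℝ) * s0)]
    have hsinle := abs_sin_nat_mul_le d s0
    have hsq : Real.sin ((d:ℝ) * s0) ^ 2 ≤ (d:ℝ)^2 * Real.sin s0 ^ 2 := by
      have h' : |Real.sin ((d:ℝ) * s0)|^2 ≤ ((d:ℝ) * |Real.sin s0|)^2 := by
        apply pow_le_pow_left₀ (abs_nonneg _) hsinle
      rw [sq_abs] at h'
      calc Real.sin ((d:ℝ) * s0) ^ 2 ≤ ((d:ℝ) * |Real.sin s0|)^2 := h'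
        _ = (d:ℝ)^2 * Real.sin s0 ^ 2 := by rw [mul_pow, sq_abs]
    rw [← hε']
    linarith
  -- final computation
  have hGε2 : G.eval ε = ∑ k ∈ S, (-1:ℝ)^k * B k := by
    rw [interp_eval G hGdeg]
    apply Finset.sum_congr rfl
    intro k hk
    rw [hGnode k ((hmemS k).mp hk)]
  have key : P.eval ε - P.eval 0 =
      ∑ k ∈ S, P.eval (t k) * (B k - if k = 0 then 1 else 0) := by
    have h0mem : (0:ℕ) ∈ S := (hmemS 0).mpr (by omega)
    have hdelta : ∑ k ∈ S, P.eval (t k) * (if k = 0 then (1:ℝ) else 0) = P.eval 0 := by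
      rw [Finset.sum_congr rfl (fun k _ => by rw [mul_ite, mul_one, mul_zero])]
      rw [Finset.sum_ite_eq' S 0 (fun k => P.eval (t k))]
      rw [if_pos h0mem, ht0]
    calc P.eval ε - P.eval 0
        = (∑ k ∈ S, P.eval (t k) * B k) -
          (∑ k ∈ S, P.eval (t k) * (if k = 0 then (1:ℝ) else 0)) := by
          rw [interp_eval P hdeg, hdelta]
      _ = ∑ k ∈ S, P.eval (t k) * (B k - if k = 0 then 1 else 0) := by
          rw [← Finset.sum_sub_distrib]
          apply Finset.sum_congr rfl
          intro k _
          ring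
  have habs_term : ∀ k ∈ S, |B k - if k = 0 then (1:ℝ) else 0| =
      (-1:ℝ)^(k+1) * (B k - if k = 0 then 1 else 0) := by
    intro k hk
    rw [hmemS] at hk
    rcases Nat.eq_zero_or_pos k with rfl | hk1
    · rw [if_pos rfl]
      rw [abs_of_nonpos (by linarith [hB0.2])]
      norm_num
    · rw [if_neg (by omega), sub_zero]
      exact hsign k hk1 hk
  have hsum_signed : ∑ k ∈ S, (-1:ℝ)^(k+1) * (B k - if k = 0 then 1 else 0) =
      1 - G.eval ε := by
    have h0mem : (0:ℕ) ∈ S := (hmemS 0).mpr (by omega)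
    have hdelta : ∑ k ∈ S, (-1:ℝ)^(k+1) * (if k = 0 then (1:ℝ) else 0) = -1 := by
      rw [Finset.sum_congr rfl (fun k _ => by rw [mul_ite, mul_one, mul_zero])]
      have : ∀ k : ℕ, (if k = 0 then (-1:ℝ)^(k+1) else 0) = (if k = 0 then (-1:ℝ) else 0) := by
        intro k
        by_cases hk0 : k = 0
        · subst hk0; rw [if_pos rfl, if_pos rfl]; norm_num
        · rw [if_neg hk0, if_neg hk0]
      rw [Finset.sum_congr rfl (fun k _ => this k)]
      rw [Finset.sum_ite_eq' S 0 (fun _ => (-1:ℝ))]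
      rw [if_pos h0mem]
    have hsplit : ∑ k ∈ S, (-1:ℝ)^(k+1) * (B k - if k = 0 then 1 else 0) =
        (∑ k ∈ S, (-1:ℝ)^(k+1) * B k) -
        (∑ k ∈ S, (-1:ℝ)^(k+1) * (if k = 0 then (1:ℝ) else 0)) := by
      rw [← Finset.sum_sub_distrib]
      apply Finset.sum_congr rfl
      intro k _
      ring
    rw [hsplit, hdelta, hGε2]
    have : ∑ k ∈ S, (-1:ℝ)^(k+1) * B k = -∑ k ∈ S, (-1:ℝ)^k * B k := by
      rw [← Finset.sum_neg_distrib]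
      apply Finset.sum_congr rfl
      intro k _
      rw [pow_succ]
      ring
    rw [this]
    ring
  calc |P.eval ε - P.eval 0|
      ≤ ∑ k ∈ S, |P.eval (t k) * (B k - if k = 0 then 1 else 0)| := by
        rw [key]; exact Finset.abs_sum_le_sum_abs _ _
    _ ≤ ∑ k ∈ S, (-1:ℝ)^(k+1) * (B k - if k = 0 then 1 else 0) := by
        apply Finset.sum_le_sum
        intro k hk
        rw [abs_mul, habs_term k hk]
        have hkd := (hmemS k).mp hk
        have hPk := hbd (t k) (htmem k hkd).1 (htmem k hkd).2
        have hPk' : |P.eval (t k)| ≤ 1 := abs_le.mpr ⟨by linarith [hPk.1], hPk.2⟩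
        have hnn : 0 ≤ (-1:ℝ)^(k+1) * (B k - if k = 0 then 1 else 0) := by
          rw [← habs_term k hk]; exact abs_nonneg _
        calc |P.eval (t k)| * ((-1:ℝ)^(k+1) * (B k - if k = 0 then 1 else 0))
            ≤ 1 * ((-1:ℝ)^(k+1) * (B k - if k = 0 then 1 else 0)) := by
              apply mul_le_mul_of_nonneg_right hPk' hnn
          _ = (-1:ℝ)^(k+1) * (B k - if k = 0 then 1 else 0) := one_mul _
    _ = 1 - G.eval ε := hsum_signed
    _ ≤ 2 * (d:ℝ)^2 * ε := htrig


end PartC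


/-! ### Part B : the acceptance probability is in [0,1] -/

def flipO (f : X → Bool) : QJ X Z → QJ X Z := fun r => (r.1, xor r.2.1 (f r.1), r.2.2)

lemma flipO_invol (f : X → Bool) (r : QJ X Z) : flipO f (flipO f r) = r := by
  obtain ⟨x, b, z⟩ := r
  simp [flipO, Bool.xor_assoc]

lemma oracleM_apply (f : X → Bool) (p r : QJ X Z) :
    oracleM f p r = if p = flipO f r then 1 else 0 := rfl

lemma oracleM_mul_self (f : X → Bool) :
    (oracleM f : Matrix (QJ X Z) (QJ X Z) ℂ) * oracleM f = 1 := by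
  ext p r
  rw [Matrix.mul_apply, Matrix.one_apply]
  rw [Finset.sum_eq_single (flipO f r)]
  · rw [oracleM_apply, oracleM_apply, if_pos rfl, mul_one, flipO_invol]
  · intro s _ hs
    rw [oracleM_apply f s r, if_neg hs, mul_zero]
  · intro h
    exact absurd (Finset.mem_univ _) h

lemma star_oracleM (f : X → Bool) :
    star (oracleM f : Matrix (QJ X Z) (QJ X Z) ℂ) = oracleM f := by
  ext p r
  rw [Matrix.star_apply, oracleM_apply, oracleM_apply]
  have hiff : r = flipO f p ↔ p = flipO f r :=
    ⟨fun h => by rw [h, flipO_invol], fun h => by rw [h, flipO_invol]⟩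
  rw [if_congr hiff rfl rfl]
  split <;> simp

lemma oracleM_unitary (f : X → Bool) :
    (oracleM f : Matrix (QJ X Z) (QJ X Z) ℂ) ∈ Matrix.unitaryGroup (QJ X Z) ℂ := by
  rw [Matrix.mem_unitaryGroup_iff']
  rw [star_oracleM, oracleM_mul_self]

lemma circuit_unitary (n : ℕ) (V : ℕ → Matrix (QJ X Z) (QJ X Z) ℂ)
    (hV : ∀ j, V j ∈ Matrix.unitaryGroup (QJ X Z) ℂ) (f : X → Bool) :
    circuit n V (oracleM f) ∈ Matrix.unitaryGroup (QJ X Z) ℂ := by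
  induction n with
  | zero => exact hV 0
  | succ n ih => exact mul_mem (mul_mem (hV (n+1)) (oracleM_unitary f)) ih

lemma unitary_norm (U : Matrix (QJ X Z) (QJ X Z) ℂ)
    (hU : U ∈ Matrix.unitaryGroup (QJ X Z) ℂ) (ψ : QJ X Z → ℂ) :
    star (U.mulVec ψ) ⬝ᵥ (U.mulVec ψ) = star ψ ⬝ᵥ ψ := by
  rw [Matrix.star_mulVec, Matrix.dotProduct_mulVec, Matrix.vecMul_vecMul]
  have h : Uᴴ * U = 1 := by
    have := Matrix.mem_unitaryGroup_iff'.mp hU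
    rwa [Matrix.star_eq_conjTranspose] at this
  rw [h, Matrix.vecMul_one]

lemma accProb_mem (q : ℕ) (V : ℕ → Matrix (QJ X Z) (QJ X Z) ℂ)
    (hV : ∀ j, V j ∈ Matrix.unitaryGroup (QJ X Z) ℂ)
    (ψ : QJ X Z → ℂ) (hψ : star ψ ⬝ᵥ ψ = 1)
    (Mout : Matrix (QJ X Z) (QJ X Z) ℂ)
    (hM : Mout.PosSemidef)
    (hM' : ((1 : Matrix (QJ X Z) (QJ X Z) ℂ) - Mout).PosSemidef) (f : X → Bool) :
    0 ≤ accProb q V ψ Mout f ∧ accProb q V ψ Mout f ≤ 1 := by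
  set φ : QJ X Z → ℂ := (circuit q V (oracleM f)).mulVec ψ with hφdef
  have hφ : star φ ⬝ᵥ φ = 1 := by
    rw [hφdef, unitary_norm _ (circuit_unitary q V hV f), hψ]
  have h0 : (0:ℂ) ≤ star φ ⬝ᵥ Mout.mulVec φ := hM.dotProduct_mulVec_nonneg φ
  have h1 : (0:ℂ) ≤ star φ ⬝ᵥ ((1 - Mout).mulVec φ) := hM'.dotProduct_mulVec_nonneg φ
  have hsub : star φ ⬝ᵥ ((1 - Mout).mulVec φ) = 1 - star φ ⬝ᵥ Mout.mulVec φ := by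
    rw [Matrix.sub_mulVec, dotProduct_sub, Matrix.one_mulVec, hφ]
  rw [hsub] at h1
  rw [Complex.le_def] at h0 h1
  simp only [Complex.zero_re, Complex.sub_re, Complex.one_re] at h0 h1
  constructor
  · exact h0.1
  · unfold accProb
    rw [← hφdef]
    linarith [h1.1]

lemma bern_sum_one (ε : ℝ) : ∑ f : X → Bool, bern ε f = 1 := by
  unfold bern
  rw [← Fintype.prod_sum (fun (x : X) (b : Bool) => if b then ε else 1 - ε)]
  have : ∀ x : X, (∑ b : Bool, if b then ε else 1 - ε) = 1 := by
    intro x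
    rw [Fintype.sum_bool]
    norm_num
  rw [Finset.prod_congr rfl (fun x _ => this x)]
  exact Finset.prod_const_one

lemma bern_nonneg (ε : ℝ) (h0 : 0 ≤ ε) (h1 : ε ≤ 1) (f : X → Bool) : 0 ≤ bern ε f := by
  apply Finset.prod_nonneg
  intro x _
  split <;> linarith

lemma bern_zero (f : X → Bool) :
    bern (0:ℝ) f = if (∀ x, f x = false) then 1 else 0 := by
  unfold bern
  rw [← Fintype.prod_boole]
  apply Finset.prod_congr rfl
  intro x _
  cases hfx : f x <;> simp [hfx]

/-! ### Part A : path expansion of the circuit -/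

def sel (x : X) (b : Bool) : Matrix (QJ X Z) (QJ X Z) ℂ :=
  Matrix.of fun p r => if r.1 = x ∧ p = (r.1, xor r.2.1 b, r.2.2) then 1 else 0

lemma oracle_eq_sum (f : X → Bool) :
    (oracleM f : Matrix (QJ X Z) (QJ X Z) ℂ) =
      ∑ s : X × Bool, (if f s.1 = s.2 then (1:ℂ) else 0) • sel s.1 s.2 := by
  rw [Fintype.sum_prod_type]
  ext p r
  obtain ⟨rx, rb, rz⟩ := r
  simp only [oracleM, sel, Matrix.of_apply, Matrix.sum_apply, Matrix.smul_apply, smul_eq_mul]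
  rw [Finset.sum_eq_single rx]
  · rw [Fintype.sum_bool]
    cases hf : f rx <;> simp [hf]
  · intro x _ hx
    apply Finset.sum_eq_zero
    intro b _
    have hcond : ¬ (rx = x ∧ p = (rx, xor rb b, rz)) := fun h => hx h.1.symm
    rw [if_neg hcond, mul_zero]
  · intro h
    exact absurd (Finset.mem_univ _) h

def Dmat (V : ℕ → Matrix (QJ X Z) (QJ X Z) ℂ) :
    (n : ℕ) → (Fin n → X × Bool) → Matrix (QJ X Z) (QJ X Z) ℂ
  | 0, _ => V 0
  | n + 1, w => V (n + 1) * sel (w 0).1 (w 0).2 * Dmat V n (fun i => w i.succ)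

def indC (f : X → Bool) {n : ℕ} (w : Fin n → X × Bool) : ℂ :=
  if ∀ i, f (w i).1 = (w i).2 then 1 else 0

def indR (f : X → Bool) {n : ℕ} (w : Fin n → X × Bool) : ℝ :=
  if ∀ i, f (w i).1 = (w i).2 then 1 else 0

lemma indC_eq (f : X → Bool) {n : ℕ} (w : Fin n → X × Bool) :
    indC f w = ((indR f w : ℝ) : ℂ) := by
  unfold indC indR
  split <;> simp

lemma circuit_expand (V : ℕ → Matrix (QJ X Z) (QJ X Z) ℂ) (f : X → Bool) (n : ℕ) :
    circuit n V (oracleM f) =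
      ∑ w : Fin n → X × Bool, indC f w • Dmat V n w := by
  induction n with
  | zero =>
    rw [show circuit 0 V (oracleM f) = V 0 from rfl]
    rw [Fintype.sum_unique]
    have : indC f (default : Fin 0 → X × Bool) = 1 := by
      unfold indC
      rw [if_pos (fun i => i.elim0)]
    rw [this, one_smul]
    rfl
  | succ n ih =>
    have key : ∀ (s : X × Bool) (w : Fin n → X × Bool),
        Dmat V (n+1) (Fin.cons s w) = V (n+1) * sel s.1 s.2 * Dmat V n w := by
      intro s w
      simp only [Dmat, Fin.cons_zero, Fin.cons_succ]
    have cond : ∀ (s : X × Bool) (w : Fin n → X × Bool),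
        indC f (Fin.cons s w) = (if f s.1 = s.2 then (1:ℂ) else 0) * indC f w := by
      intro s w
      unfold indC
      have hiff : (∀ i, f ((Fin.cons s w : Fin (n+1) → X × Bool) i).1 =
          ((Fin.cons s w : Fin (n+1) → X × Bool) i).2) ↔
          (f s.1 = s.2 ∧ ∀ i, f (w i).1 = (w i).2) := by
        constructor
        · intro h
          refine ⟨by simpa using h 0, fun i => by simpa using h i.succ⟩
        · rintro ⟨h0, hs⟩ i
          refine Fin.cases ?_ ?_ i
          · simpa using h0
          · intro j; simpa using hs j
      rw [if_congr hiff rfl rfl]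
      by_cases h1 : f s.1 = s.2 <;> by_cases h2 : ∀ i, f (w i).1 = (w i).2 <;>
        simp [h1, h2]
    have rhs_eq : (∑ w : Fin (n+1) → X × Bool, indC f w • Dmat V (n+1) w)
        = ∑ s : X × Bool, ∑ w : Fin n → X × Bool,
            indC f (Fin.cons s w) • Dmat V (n+1) (Fin.cons s w) := by
      rw [← Equiv.sum_comp (Fin.consEquiv (fun _ : Fin (n+1) => X × Bool))
        (fun w => indC f w • Dmat V (n+1) w)]
      rw [Fintype.sum_prod_type]
      rfl
    rw [show circuit (n+1) V (oracleM f) = V (n+1) * oracleM f * circuit n V (oracleM f)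
      from rfl, ih, oracle_eq_sum, rhs_eq]
    calc V (n+1) * (∑ s : X × Bool, (if f s.1 = s.2 then (1:ℂ) else 0) • sel s.1 s.2) *
          (∑ w : Fin n → X × Bool, indC f w • Dmat V n w)
        = ∑ s : X × Bool, ∑ w : Fin n → X × Bool,
            ((if f s.1 = s.2 then (1:ℂ) else 0) * indC f w) • (V (n+1) * sel s.1 s.2 * Dmat V n w) := by
          have hA : V (n+1) * (∑ s : X × Bool, (if f s.1 = s.2 then (1:ℂ) else 0) • sel s.1 s.2)
              = ∑ s : X × Bool, (if f s.1 = s.2 then (1:ℂ) else 0) •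
                  (V (n+1) * sel s.1 s.2) := by
            rw [Finset.mul_sum]
            exact Finset.sum_congr rfl fun s _ => mul_smul_comm _ _ _
          rw [hA, Finset.sum_mul]
          apply Finset.sum_congr rfl
          intro s _
          rw [Finset.mul_sum]
          apply Finset.sum_congr rfl
          intro w _
          rw [smul_mul_assoc, mul_smul_comm, smul_smul]
      _ = ∑ s : X × Bool, ∑ w : Fin n → X × Bool,
            indC f (Fin.cons s w) • Dmat V (n+1) (Fin.cons s w) := by
          apply Finset.sum_congr rfl
          intro s _
          apply Finset.sum_congr rfl
          intro w _
          rw [key, cond]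

/-! ### sum helpers for `mulVec` and `dotProduct` -/

lemma sum_mulVec {ι : Type*} (s : Finset ι) (A : ι → Matrix (QJ X Z) (QJ X Z) ℂ)
    (ψ : QJ X Z → ℂ) : (∑ i ∈ s, A i).mulVec ψ = ∑ i ∈ s, (A i).mulVec ψ := by
  ext j
  simp only [Matrix.mulVec, dotProduct, Finset.sum_apply, Matrix.sum_apply,
    Finset.sum_mul]
  rw [Finset.sum_comm]

lemma mulVec_sumv {ι : Type*} (s : Finset ι) (M : Matrix (QJ X Z) (QJ X Z) ℂ)
    (g : ι → QJ X Z → ℂ) : M.mulVec (∑ i ∈ s, g i) = ∑ i ∈ s, M.mulVec (g i) := by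
  ext j
  simp only [Matrix.mulVec, dotProduct, Finset.sum_apply, Finset.mul_sum]
  rw [Finset.sum_comm]

lemma dotProduct_sum_left {ι : Type*} (s : Finset ι) (g : ι → QJ X Z → ℂ) (y : QJ X Z → ℂ) :
    (∑ i ∈ s, g i) ⬝ᵥ y = ∑ i ∈ s, (g i ⬝ᵥ y) := by
  simp only [dotProduct, Finset.sum_apply, Finset.sum_mul]
  rw [Finset.sum_comm]

lemma dotProduct_sum_right {ι : Type*} (s : Finset ι) (y : QJ X Z → ℂ) (g : ι → QJ X Z → ℂ) :
    y ⬝ᵥ (∑ i ∈ s, g i) = ∑ i ∈ s, (y ⬝ᵥ g i) := by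
  simp only [dotProduct, Finset.sum_apply, Finset.mul_sum]
  rw [Finset.sum_comm]

/-! ### expansion of the acceptance probability -/

def Kc (q : ℕ) (V : ℕ → Matrix (QJ X Z) (QJ X Z) ℂ) (ψ : QJ X Z → ℂ)
    (Mout : Matrix (QJ X Z) (QJ X Z) ℂ) (w w' : Fin q → X × Bool) : ℂ :=
  star ((Dmat V q w).mulVec ψ) ⬝ᵥ Mout.mulVec ((Dmat V q w').mulVec ψ)

lemma acc_expand (q : ℕ) (V : ℕ → Matrix (QJ X Z) (QJ X Z) ℂ) (ψ : QJ X Z → ℂ)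
    (Mout : Matrix (QJ X Z) (QJ X Z) ℂ) (f : X → Bool) :
    accProb q V ψ Mout f =
      ∑ w : Fin q → X × Bool, ∑ w' : Fin q → X × Bool,
        indR f w * indR f w' * (Kc q V ψ Mout w w').re := by
  unfold accProb
  have hφ : (circuit q V (oracleM f)).mulVec ψ =
      ∑ w : Fin q → X × Bool, indC f w • (Dmat V q w).mulVec ψ := by
    rw [circuit_expand, sum_mulVec]
    apply Finset.sum_congr rfl
    intro w _
    rw [Matrix.smul_mulVec]
  rw [hφ]
  rw [star_sum]
  rw [mulVec_sumv]
  rw [dotProduct_sum_left]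
  rw [Complex.re_sum]
  apply Finset.sum_congr rfl
  intro w _
  rw [dotProduct_sum_right]
  rw [Complex.re_sum]
  apply Finset.sum_congr rfl
  intro w' _
  rw [star_smul, Matrix.mulVec_smul]
  rw [smul_dotProduct, dotProduct_smul]
  rw [smul_eq_mul, smul_eq_mul]
  have hstar : star (indC f w) = indC f w := by
    unfold indC
    split <;> simp
  rw [hstar, indC_eq, indC_eq]
  rw [Complex.re_ofReal_mul, Complex.re_ofReal_mul]
  unfold Kc
  ring

/-! ### marginalization over the Bernoulli measure -/

lemma ite_mul_ite (P Q : Prop) [Decidable P] [Decidable Q] :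
    (if P then (1:ℝ) else 0) * (if Q then 1 else 0) = if P ∧ Q then 1 else 0 := by
  by_cases hP : P <;> by_cases hQ : Q <;> simp [hP, hQ]

def locp {n : ℕ} (w w' : Fin n → X × Bool) (x : X) : Polynomial ℝ :=
  ∑ b : Bool, (if b then Polynomial.X else 1 - Polynomial.X) *
    (if (∀ i, (w i).1 = x → (w i).2 = b) ∧ (∀ i, (w' i).1 = x → (w' i).2 = b) then 1 else 0)

lemma eval_locp (ε : ℝ) {n : ℕ} (w w' : Fin n → X × Bool) (x : X) :
    (locp w w' x).eval ε = ∑ b : Bool, (if b then ε else 1 - ε) *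
      (if (∀ i, (w i).1 = x → (w i).2 = b) ∧ (∀ i, (w' i).1 = x → (w' i).2 = b)
        then (1:ℝ) else 0) := by
  unfold locp
  rw [Polynomial.eval_finset_sum]
  apply Finset.sum_congr rfl
  intro b _
  rw [Polynomial.eval_mul]
  congr 1
  · cases b <;> simp
  · split <;> simp

lemma indR_prod (f : X → Bool) {n : ℕ} (w : Fin n → X × Bool) :
    indR f w = ∏ x : X, (if (∀ i, (w i).1 = x → (w i).2 = f x) then (1:ℝ) else 0) := by
  rw [Fintype.prod_boole]
  unfold indR
  have hiff : (∀ i, f (w i).1 = (w i).2) ↔ (∀ x, ∀ i, (w i).1 = x → (w i).2 = f x) := by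
    constructor
    · intro h x i hx
      rw [← hx, h i]
    · intro h i
      exact (h (w i).1 i rfl).symm
  rw [if_congr hiff rfl rfl]

lemma bern_marginal (ε : ℝ) {n : ℕ} (w w' : Fin n → X × Bool) :
    ∑ f : X → Bool, bern ε f * indR f w * indR f w' =
      ∏ x : X, (locp w w' x).eval ε := by
  have hterm : ∀ f : X → Bool, bern ε f * indR f w * indR f w' =
      ∏ x : X, ((if f x then ε else 1 - ε) *
        (if (∀ i, (w i).1 = x → (w i).2 = f x) ∧ (∀ i, (w' i).1 = x → (w' i).2 = f x)
          then (1:ℝ) else 0)) := by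
    intro f
    rw [indR_prod f w, indR_prod f w']
    unfold bern
    rw [← Finset.prod_mul_distrib, ← Finset.prod_mul_distrib]
    apply Finset.prod_congr rfl
    intro x _
    rw [mul_assoc, ite_mul_ite]
  rw [Finset.sum_congr rfl (fun f _ => hterm f)]
  rw [← Fintype.prod_sum (fun (x : X) (b : Bool) => (if b then ε else 1 - ε) *
    (if (∀ i, (w i).1 = x → (w i).2 = b) ∧ (∀ i, (w' i).1 = x → (w' i).2 = b)
      then (1:ℝ) else 0))]
  apply Finset.prod_congr rfl
  intro x _
  rw [eval_locp]

/-! ### the polynomial and its degree -/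

def Qpoly {n : ℕ} (w w' : Fin n → X × Bool) : Polynomial ℝ := ∏ x : X, locp w w' x

lemma natDegree_locp_le {n : ℕ} (w w' : Fin n → X × Bool) (x : X) :
    (locp w w' x).natDegree ≤ 1 := by
  unfold locp
  rw [Fintype.sum_bool]
  apply le_trans (Polynomial.natDegree_add_le _ _)
  have hC : ∀ (C : Prop) (inst : Decidable C),
      (if C then (1 : Polynomial ℝ) else 0).natDegree = 0 := by
    intro C inst
    split <;> simp
  apply max_le
  · apply le_trans Polynomial.natDegree_mul_le
    rw [hC]
    simp only [eq_self_iff_true, if_true]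
    simp [Polynomial.natDegree_X]
  · apply le_trans Polynomial.natDegree_mul_le
    rw [hC]
    simp only [Bool.false_eq_true, if_false]
    have h1X : (1 - Polynomial.X : Polynomial ℝ).natDegree ≤ 1 := by
      apply le_trans (Polynomial.natDegree_sub_le _ _)
      simp
    omega

lemma locp_eq_one {n : ℕ} (w w' : Fin n → X × Bool) (x : X)
    (h1 : ∀ i, (w i).1 ≠ x) (h2 : ∀ i, (w' i).1 ≠ x) : locp w w' x = 1 := by
  unfold locp
  rw [Fintype.sum_bool]
  simp only [eq_self_iff_true, if_true, Bool.false_eq_true, if_false]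
  rw [if_pos ⟨fun i hx => absurd hx (h1 i), fun i hx => absurd hx (h2 i)⟩,
      if_pos ⟨fun i hx => absurd hx (h1 i), fun i hx => absurd hx (h2 i)⟩]
  ring

lemma natDegree_Qpoly_le {n : ℕ} (w w' : Fin n → X × Bool) :
    (Qpoly w w').natDegree ≤ 2 * n := by
  classical
  set T : Finset X := (Finset.image (fun i => (w i).1) Finset.univ) ∪
    (Finset.image (fun i => (w' i).1) Finset.univ) with hT
  have hTcard : T.card ≤ 2 * n := by
    apply le_trans (Finset.card_union_le _ _)
    have c1 : (Finset.image (fun i => (w i).1) Finset.univ).card ≤ n := by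
      apply le_trans (Finset.card_image_le)
      simp
    have c2 : (Finset.image (fun i => (w' i).1) Finset.univ).card ≤ n := by
      apply le_trans (Finset.card_image_le)
      simp
    omega
  have hsplit : Qpoly w w' = ∏ x ∈ T, locp w w' x := by
    unfold Qpoly
    rw [← Finset.prod_mul_prod_compl T (locp w w')]
    have hcompl : ∏ x ∈ Tᶜ, locp w w' x = 1 := by
      apply Finset.prod_eq_one
      intro x hx
      rw [Finset.mem_compl, hT, Finset.mem_union] at hx
      push_neg at hx
      obtain ⟨hx1, hx2⟩ := hx
      simp only [Finset.mem_image, Finset.mem_univ, true_and, not_exists] at hx1 hx2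
      exact locp_eq_one w w' x hx1 hx2
    rw [hcompl, mul_one]
  rw [hsplit]
  apply le_trans (Polynomial.natDegree_prod_le _ _)
  calc ∑ x ∈ T, (locp w w' x).natDegree ≤ ∑ x ∈ T, 1 :=
        Finset.sum_le_sum (fun x _ => natDegree_locp_le w w' x)
    _ = T.card := by simp
    _ ≤ 2 * n := hTcard

def Ppoly (q : ℕ) (V : ℕ → Matrix (QJ X Z) (QJ X Z) ℂ) (ψ : QJ X Z → ℂ)
    (Mout : Matrix (QJ X Z) (QJ X Z) ℂ) : Polynomial ℝ :=
  ∑ w : Fin q → X × Bool, ∑ w' : Fin q → X × Bool,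
    Polynomial.C ((Kc q V ψ Mout w w').re) * Qpoly w w'

lemma natDegree_Ppoly_le (q : ℕ) (V : ℕ → Matrix (QJ X Z) (QJ X Z) ℂ) (ψ : QJ X Z → ℂ)
    (Mout : Matrix (QJ X Z) (QJ X Z) ℂ) : (Ppoly q V ψ Mout).natDegree ≤ 2 * q := by
  apply Polynomial.natDegree_sum_le_of_forall_le
  intro w _
  apply Polynomial.natDegree_sum_le_of_forall_le
  intro w' _
  exact le_trans (Polynomial.natDegree_C_mul_le _ _) (natDegree_Qpoly_le w w')

lemma eval_Ppoly (q : ℕ) (V : ℕ → Matrix (QJ X Z) (QJ X Z) ℂ) (ψ : QJ X Z → ℂ)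
    (Mout : Matrix (QJ X Z) (QJ X Z) ℂ) (ε : ℝ) :
    (Ppoly q V ψ Mout).eval ε = ∑ f : X → Bool, bern ε f * accProb q V ψ Mout f := by
  have step1 : (Ppoly q V ψ Mout).eval ε
      = ∑ w : Fin q → X × Bool, ∑ w' : Fin q → X × Bool, (Kc q V ψ Mout w w').re *
          (∑ f : X → Bool, bern ε f * indR f w * indR f w') := by
    unfold Ppoly
    rw [Polynomial.eval_finset_sum]
    apply Finset.sum_congr rfl
    intro w _
    rw [Polynomial.eval_finset_sum]
    apply Finset.sum_congr rfl
    intro w' _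
    rw [Polynomial.eval_mul, Polynomial.eval_C]
    congr 1
    rw [bern_marginal]
    unfold Qpoly
    rw [Polynomial.eval_prod]
  rw [step1]
  have step2 : ∀ w : Fin q → X × Bool, ∑ w' : Fin q → X × Bool, (Kc q V ψ Mout w w').re *
        (∑ f : X → Bool, bern ε f * indR f w * indR f w')
      = ∑ f : X → Bool, ∑ w' : Fin q → X × Bool,
          bern ε f * (indR f w * indR f w' * (Kc q V ψ Mout w w').re) := by
    intro w
    rw [Finset.sum_comm]
    apply Finset.sum_congr rfl
    intro w' _
    rw [Finset.mul_sum]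
    apply Finset.sum_congr rfl
    intro f _
    ring
  rw [Finset.sum_congr rfl (fun w _ => step2 w)]
  rw [Finset.sum_comm]
  apply Finset.sum_congr rfl
  intro f _
  rw [acc_expand, Finset.mul_sum]
  apply Finset.sum_congr rfl
  intro w _
  rw [Finset.mul_sum]


end HRSaux

/-- **Sparse-oracle indistinguishability (Hülsing–Rijneveld–Song).**
For any quantum algorithm making at most `q` quantum queries,
`|Pr[A^{H_ε} = 1] − Pr[A^{H₀} = 1]| ≤ 8q²ε`, where `H_ε` is a random function whose
values are independently `1` with probability `ε`, and `H₀` is the all-zero function. -/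
theorem stmt8 (ε : ℝ) (hε0 : 0 ≤ ε) (hε1 : ε ≤ 1) (q : ℕ)
    (V : ℕ → Matrix (QJ X Z) (QJ X Z) ℂ)
    (hV : ∀ j, V j ∈ Matrix.unitaryGroup (QJ X Z) ℂ)
    (ψ : QJ X Z → ℂ) (hψ : star ψ ⬝ᵥ ψ = 1)
    (Mout : Matrix (QJ X Z) (QJ X Z) ℂ)
    (hM : Mout.PosSemidef)
    (hM' : ((1 : Matrix (QJ X Z) (QJ X Z) ℂ) - Mout).PosSemidef) :
    |(∑ f : X → Bool, bern ε f * accProb q V ψ Mout f) -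
        accProb q V ψ Mout (fun _ => false)| ≤ 8 * (q : ℝ) ^ 2 * ε := by
  classical
  rcases Nat.eq_zero_or_pos q with rfl | hq
  · -- q = 0 : the circuit does not query the oracle at all
    have hconst : ∀ f : X → Bool,
        accProb 0 V ψ Mout f = accProb 0 V ψ Mout (fun _ => false) := fun f => rfl
    rw [Finset.sum_congr rfl (fun f _ => by rw [hconst f])]
    rw [← Finset.sum_mul, HRSaux.bern_sum_one, one_mul, sub_self, abs_zero]
    positivity
  · set P : Polynomial ℝ := HRSaux.Ppoly q V ψ Mout with hPdef
    have hdeg : P.natDegree ≤ 2 * q := HRSaux.natDegree_Ppoly_le q V ψ Mout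
    have heval : ∀ x : ℝ, P.eval x = ∑ f : X → Bool, bern x f * accProb q V ψ Mout f :=
      fun x => HRSaux.eval_Ppoly q V ψ Mout x
    have hbd : ∀ x : ℝ, 0 ≤ x → x ≤ 1 → 0 ≤ P.eval x ∧ P.eval x ≤ 1 := by
      intro x hx0 hx1
      rw [heval]
      constructor
      · apply Finset.sum_nonneg
        intro f _
        exact mul_nonneg (HRSaux.bern_nonneg x hx0 hx1 f)
          (HRSaux.accProb_mem q V hV ψ hψ Mout hM hM' f).1
      · calc ∑ f : X → Bool, bern x f * accProb q V ψ Mout f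
            ≤ ∑ f : X → Bool, bern x f * 1 := by
              apply Finset.sum_le_sum
              intro f _
              exact mul_le_mul_of_nonneg_left
                (HRSaux.accProb_mem q V hV ψ hψ Mout hM hM' f).2
                (HRSaux.bern_nonneg x hx0 hx1 f)
          _ = 1 := by
              rw [Finset.sum_congr rfl (fun f _ => mul_one _), HRSaux.bern_sum_one]
    have hP0 : P.eval 0 = accProb q V ψ Mout (fun _ => false) := by
      rw [heval]
      rw [Finset.sum_congr rfl (fun f _ => by rw [HRSaux.bern_zero])]
      rw [Finset.sum_eq_single (fun _ => false)]
      · rw [if_pos (fun x => rfl), one_mul]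
      · intro f _ hf
        rw [if_neg (fun h => hf (funext h)), zero_mul]
      · intro h
        exact absurd (Finset.mem_univ _) h
    have hMk := HRSaux.markov_endpoint (2 * q) (by omega) P hdeg hbd ε hε0 hε1
    rw [← heval ε, ← hP0]
    calc |P.eval ε - P.eval 0| ≤ 2 * ((2 * q : ℕ) : ℝ)^2 * ε := hMk
      _ = 8 * (q : ℝ)^2 * ε := by push_cast; ring
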